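/- arXiv:1105.3985 — 2 statements merged into one kernel-verified Lean document; each statement's English description precedes it below -/
import Mathlib

section
/- Let n ≥ 1 be an integer and let R_n = ℂ[x,y]/(xⁿ, yⁿ). Then the kernel of the ℂ-linear endomorphism of R_n given by multiplication by (the class of) x − y is an n-dimensional ℂ-vector space. -/
open MvPolynomial

/-- The quotient `R_n = ℂ[x,y]/(xⁿ, yⁿ)`. -/
noncomputable abbrev unlinkIdeal (n : ℕ) : Ideal (MvPolynomial (Fin 2) ℂ) :=
  Ideal.span {X 0 ^ n, X 1 ^ n}

namespace UnlinkAux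

/-- The exponent finsupp of the monomial `x^i y^j`. -/
noncomputable def e (i j : ℕ) : Fin 2 →₀ ℕ := Finsupp.single 0 i + Finsupp.single 1 j

lemma e_apply_zero (i j : ℕ) : e i j 0 = i := by simp [e]

lemma e_apply_one (i j : ℕ) : e i j 1 = j := by simp [e]

lemma e_inj {i j i' j' : ℕ} : e i j = e i' j' ↔ i = i' ∧ j = j' := by
  constructor
  · intro h
    constructor
    · have := congrArg (fun f => f 0) h; simpa [e_apply_zero] using this
    · have := congrArg (fun f => f 1) h; simpa [e_apply_one] using this
  · rintro ⟨rfl, rfl⟩; rfl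

lemma eq_e (m : Fin 2 →₀ ℕ) : m = e (m 0) (m 1) := by
  ext a
  fin_cases a
  · simp [e_apply_zero]
  · simp [e_apply_one]

lemma e_sub_x (i j : ℕ) : e i j - Finsupp.single 0 1 = e (i - 1) j := by
  ext a
  rw [Finsupp.tsub_apply]
  fin_cases a
  · simp [e_apply_zero]
  · simp [e_apply_one]

lemma e_sub_y (i j : ℕ) : e i j - Finsupp.single 1 1 = e i (j - 1) := by
  ext a
  rw [Finsupp.tsub_apply]
  fin_cases a
  · simp [e_apply_zero]
  · simp [e_apply_one]

lemma not_single_le_e_zero {N i j : ℕ} (h : i < N) : ¬ Finsupp.single (0 : Fin 2) N ≤ e i j := by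
  intro hle
  have := hle 0
  simp [e_apply_zero] at this
  omega

lemma not_single_le_e_one {N i j : ℕ} (h : j < N) : ¬ Finsupp.single (1 : Fin 2) N ≤ e i j := by
  intro hle
  have := hle 1
  simp [e_apply_one] at this
  omega

/-- Coefficients with both exponents `< n` vanish on the ideal. -/
lemma coeff_eq_zero_of_mem {n i j : ℕ} (hi : i < n) (hj : j < n)
    {q : MvPolynomial (Fin 2) ℂ} (hq : q ∈ unlinkIdeal n) : coeff (e i j) q = 0 := by
  rw [unlinkIdeal, Ideal.mem_span_pair] at hq
  obtain ⟨a, b, rfl⟩ := hq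
  rw [coeff_add, X_pow_eq_monomial, X_pow_eq_monomial, coeff_mul_monomial',
    coeff_mul_monomial', if_neg (not_single_le_e_zero hi), if_neg (not_single_le_e_one hj),
    add_zero]

/-- A polynomial all of whose small coefficients vanish lies in the ideal. -/
lemma mem_of_coeff {n : ℕ} {q : MvPolynomial (Fin 2) ℂ}
    (h : ∀ i j, i < n → j < n → coeff (e i j) q = 0) : q ∈ unlinkIdeal n := by
  rw [MvPolynomial.as_sum q]
  apply Ideal.sum_mem
  intro m _
  by_cases h0 : n ≤ m 0
  · have hmeq : m - Finsupp.single (0 : Fin 2) n + Finsupp.single (0 : Fin 2) n = m := by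
      ext a
      rw [Finsupp.add_apply, Finsupp.tsub_apply]
      fin_cases a <;> simp [Finsupp.single_apply] <;> omega
    have hm : monomial m (coeff m q)
        = monomial (m - Finsupp.single 0 n) (coeff m q) * X 0 ^ n := by
      rw [X_pow_eq_monomial, monomial_mul, mul_one, hmeq]
    rw [hm]
    exact Ideal.mul_mem_left _ _ (Ideal.subset_span (by simp))
  · by_cases h1 : n ≤ m 1
    · have hmeq : m - Finsupp.single (1 : Fin 2) n + Finsupp.single (1 : Fin 2) n = m := by
        ext a
        rw [Finsupp.add_apply, Finsupp.tsub_apply]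
        fin_cases a <;> simp [Finsupp.single_apply] <;> omega
      have hm : monomial m (coeff m q)
          = monomial (m - Finsupp.single 1 n) (coeff m q) * X 1 ^ n := by
        rw [X_pow_eq_monomial, monomial_mul, mul_one, hmeq]
      rw [hm]
      exact Ideal.mul_mem_left _ _ (Ideal.subset_span (by simp))
    · have : coeff m q = 0 := by
        rw [eq_e m]
        exact h _ _ (by omega) (by omega)
      rw [this]
      simp

variable {n : ℕ} {p : MvPolynomial (Fin 2) ℂ}

/-- The basic recurrence satisfied by coefficients of an element of the kernel. -/
lemma rel (hp : (X 0 - X 1) * p ∈ unlinkIdeal n) {i j : ℕ} (hi : i < n) (hj : j < n) :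
    (if i = 0 then 0 else coeff (e (i - 1) j) p)
      = (if j = 0 then 0 else coeff (e i (j - 1)) p) := by
  classical
  have h0 : coeff (e i j) ((X 0 - X 1) * p) = 0 := coeff_eq_zero_of_mem hi hj hp
  rw [sub_mul, coeff_sub, mul_comm (X 0) p, mul_comm (X 1) p, coeff_mul_X', coeff_mul_X',
    e_sub_x, e_sub_y, sub_eq_zero] at h0
  simp only [Finsupp.mem_support_iff, e_apply_zero, e_apply_one, ne_eq, ite_not] at h0
  exact h0

lemma c_lower (hp : (X 0 - X 1) * p ∈ unlinkIdeal n) :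
    ∀ j i, i < n → j < n → i + j < n - 1 → coeff (e i j) p = 0 := by
  intro j
  induction j with
  | zero =>
    intro i hi _ hij
    have h := rel hp (i := i + 1) (j := 0) (by omega) (by omega)
    simpa using h
  | succ j ih =>
    intro i hi hj hij
    have h := rel hp (i := i + 1) (j := j + 1) (by omega) (by omega)
    simp only [Nat.add_sub_cancel, if_neg (Nat.succ_ne_zero i), if_neg (Nat.succ_ne_zero j)] at h
    rw [h]
    exact ih (i + 1) (by omega) (by omega) (by omega)

lemma c_diag (hp : (X 0 - X 1) * p ∈ unlinkIdeal n) :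
    ∀ j i, i < n → j < n → n - 1 ≤ i + j →
      coeff (e i j) p = coeff (e (n - 1) (i + j - (n - 1))) p := by
  intro j
  induction j with
  | zero =>
    intro i hi _ hij
    have : i = n - 1 := by omega
    subst this
    rw [show n - 1 + 0 - (n - 1) = 0 from by omega]
  | succ j ih =>
    intro i hi hj hij
    by_cases hieq : i = n - 1
    · subst hieq
      rw [show n - 1 + (j + 1) - (n - 1) = j + 1 from by omega]
    · have h := rel hp (i := i + 1) (j := j + 1) (by omega) (by omega)
      simp only [Nat.add_sub_cancel, if_neg (Nat.succ_ne_zero i), if_neg (Nat.succ_ne_zero j)] at h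
      rw [h, ih (i + 1) (by omega) (by omega) (by omega),
        show i + 1 + j - (n - 1) = i + (j + 1) - (n - 1) from by omega]

/-- The antidiagonal sums spanning the kernel. -/
noncomputable def s (n t : ℕ) : MvPolynomial (Fin 2) ℂ :=
  ∑ r ∈ Finset.range (n - t), monomial (e (t + r) (n - 1 - r)) 1

lemma coeff_s {n t i j : ℕ} (hj : j < n) (ht : t < n) :
    coeff (e i j) (s n t)
      = if i + j = n - 1 + t ∧ t ≤ i ∧ i < n then 1 else 0 := by
  classical
  rw [s, coeff_sum]
  simp only [coeff_monomial, e_inj]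
  split_ifs with hcond
  · rw [Finset.sum_eq_single_of_mem (i - t)]
    · rw [if_pos ⟨by omega, by omega⟩]
    · simp only [Finset.mem_range]; omega
    · intro r _ hr
      rw [if_neg]
      rintro ⟨h1, h2⟩
      omega
  · apply Finset.sum_eq_zero
    intro r hr
    simp only [Finset.mem_range] at hr
    rw [if_neg]
    rintro ⟨h1, h2⟩
    exact hcond ⟨by omega, by omega, by omega⟩

lemma monomial_e (a b : ℕ) : monomial (e a b) (1 : ℂ) = X 0 ^ a * X 1 ^ b := by
  rw [X_pow_eq_monomial, X_pow_eq_monomial, monomial_mul, mul_one, e]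

lemma mul_s_mem {n t : ℕ} (ht : t < n) : (X 0 - X 1) * s n t ∈ unlinkIdeal n := by
  have key : (X 0 - X 1) * s n t = X 0 ^ n * X 1 ^ t - X 0 ^ t * X 1 ^ n := by
    rw [s, Finset.mul_sum]
    have hterm : ∀ r ∈ Finset.range (n - t),
        (X 0 - X 1) * monomial (e (t + r) (n - 1 - r)) (1 : ℂ)
          = (X 0 ^ (t + (r + 1)) * X 1 ^ (n - (r + 1)))
            - (X 0 ^ (t + r) * X 1 ^ (n - r)) := by
      intro r hr
      simp only [Finset.mem_range] at hr
      rw [monomial_e]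
      have h1 : n - (r + 1) = n - 1 - r := by omega
      have h2 : n - r = (n - 1 - r) + 1 := by omega
      rw [h1, h2, sub_mul]
      ring
    rw [Finset.sum_congr rfl hterm,
      Finset.sum_range_sub (fun r => X 0 ^ (t + r) * X 1 ^ (n - r))]
    have h3 : t + (n - t) = n := by omega
    have h4 : n - (n - t) = t := by omega
    rw [h3, h4, add_zero, Nat.sub_zero]
  rw [key]
  apply sub_mem
  · exact Ideal.mul_mem_right _ _ (Ideal.subset_span (by simp))
  · exact Ideal.mul_mem_left _ _ (Ideal.subset_span (by simp))

end UnlinkAux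

open UnlinkAux

/-- For `n ≥ 1`, the kernel of multiplication by `x - y` on `R_n = ℂ[x,y]/(xⁿ, yⁿ)`
is an `n`-dimensional `ℂ`-vector space. -/
theorem finrank_ker_mul_X_sub_Y (n : ℕ) (hn : 1 ≤ n) :
    FiniteDimensional ℂ
      ↥(LinearMap.ker (LinearMap.mulLeft ℂ
        (Ideal.Quotient.mk (unlinkIdeal n) (X 0 - X 1)))) ∧
    Module.finrank ℂ
      ↥(LinearMap.ker (LinearMap.mulLeft ℂ
        (Ideal.Quotient.mk (unlinkIdeal n) (X 0 - X 1)))) = n := by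
  classical
  set I := unlinkIdeal n with hI
  set K := LinearMap.ker (LinearMap.mulLeft ℂ (Ideal.Quotient.mk I (X 0 - X 1))) with hK
  set mkA := Ideal.Quotient.mkₐ ℂ I with hmkA
  have hmk : ∀ q : MvPolynomial (Fin 2) ℂ, mkA q = Ideal.Quotient.mk I q := fun q => by
    rw [hmkA, Ideal.Quotient.mkₐ_eq_mk]
  -- each s n t lies in the kernel
  have hker : ∀ t : Fin n, Ideal.Quotient.mk I (s n t) ∈ K := by
    intro t
    rw [hK, LinearMap.mem_ker, LinearMap.mulLeft_apply, ← map_mul,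
      Ideal.Quotient.eq_zero_iff_mem]
    exact mul_s_mem t.isLt
  -- the linear map from ℂⁿ to the kernel
  let F : (Fin n → ℂ) →ₗ[ℂ] K :=
    { toFun := fun c => ⟨∑ t : Fin n, c t • Ideal.Quotient.mk I (s n t),
        Submodule.sum_mem K fun t _ => Submodule.smul_mem K _ (hker t)⟩
      map_add' := fun c d => by
        ext
        simp [add_smul, Finset.sum_add_distrib]
      map_smul' := fun a c => by
        ext
        simp [smul_smul, Finset.smul_sum] }
  have hFval : ∀ c : Fin n → ℂ,
      (F c : MvPolynomial (Fin 2) ℂ ⧸ I)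
        = Ideal.Quotient.mk I (∑ t : Fin n, C (c t) * s n t) := by
    intro c
    show (∑ t : Fin n, c t • Ideal.Quotient.mk I (s n t)) = _
    rw [map_sum]
    apply Finset.sum_congr rfl
    intro t _
    rw [← hmk, ← hmk, ← map_smul mkA, smul_eq_C_mul]
  -- coefficient computation for linear combinations of the s's
  have hcoeff : ∀ (c : Fin n → ℂ) (i j : ℕ) (_ : i < n) (_ : j < n),
      coeff (e i j) (∑ t : Fin n, C (c t) * s n t)
        = if n - 1 ≤ i + j then c ⟨i + j - (n - 1), by omega⟩ else 0 := by
    intro c i j hi hj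
    rw [coeff_sum]
    have hterm : ∀ t : Fin n,
        coeff (e i j) (C (c t) * s n t)
          = c t * (if i + j = n - 1 + (t : ℕ) ∧ (t : ℕ) ≤ i ∧ i < n then 1 else 0) := by
      intro t
      rw [coeff_C_mul, coeff_s hj t.isLt]
    simp only [hterm]
    split_ifs with hd
    · rw [Finset.sum_eq_single_of_mem (⟨i + j - (n - 1), by omega⟩ : Fin n)]
      · rw [if_pos ⟨show i + j = n - 1 + (i + j - (n - 1)) from by omega,
          show i + j - (n - 1) ≤ i from by omega, hi⟩, mul_one]
      · exact Finset.mem_univ _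
      · intro t _ ht
        rw [if_neg, mul_zero]
        rintro ⟨h1, h2, h3⟩
        exact ht (Fin.ext (show (t : ℕ) = i + j - (n - 1) from by omega))
    · apply Finset.sum_eq_zero
      intro t _
      rw [if_neg, mul_zero]
      rintro ⟨h1, _, _⟩
      have := t.isLt
      omega
  have hFinj : Function.Injective F := by
    rw [← LinearMap.ker_eq_bot, LinearMap.ker_eq_bot']
    intro c hc
    have hval : (F c : MvPolynomial (Fin 2) ℂ ⧸ I) = 0 := by rw [hc]; rfl
    rw [hFval, Ideal.Quotient.eq_zero_iff_mem] at hval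
    funext t
    have h := coeff_eq_zero_of_mem (n := n) (i := n - 1) (j := (t : ℕ))
      (by omega) t.isLt hval
    rw [hcoeff c (n - 1) (t : ℕ) (by omega) t.isLt, if_pos (by omega)] at h
    have ht : (⟨n - 1 + (t : ℕ) - (n - 1), by omega⟩ : Fin n) = t := by
      apply Fin.ext
      simp only
      omega
    rw [ht] at h
    simpa using h
  have hFsurj : Function.Surjective F := by
    rintro ⟨v, hv⟩
    obtain ⟨p, rfl⟩ := Ideal.Quotient.mk_surjective v
    have hp : (X 0 - X 1) * p ∈ I := by
      rw [hK, LinearMap.mem_ker, LinearMap.mulLeft_apply, ← map_mul,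
        Ideal.Quotient.eq_zero_iff_mem] at hv
      exact hv
    refine ⟨fun t => coeff (e (n - 1) (t : ℕ)) p, ?_⟩
    apply Subtype.ext
    rw [hFval]
    rw [Ideal.Quotient.mk_eq_mk_iff_sub_mem]
    apply mem_of_coeff (n := n)
    intro i j hi hj
    rw [coeff_sub, hcoeff _ i j hi hj]
    split_ifs with hd
    · rw [c_diag hp j i hi hj hd]
      exact sub_self _
    · rw [c_lower hp j i hi hj (by omega)]
      simp
  let equiv : (Fin n → ℂ) ≃ₗ[ℂ] K := LinearEquiv.ofBijective F ⟨hFinj, hFsurj⟩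
  constructor
  · exact Module.Finite.equiv equiv
  · rw [← equiv.finrank_eq]
    simp
end

section
/- Let n ≥ 1 be an integer, let R_n = ℂ[x,y]/(xⁿ, yⁿ), and let h_n denote the class in R_n of the polynomial Σ_{i=0}^{n−1} x^i y^{n−1−i}. Then the kernel of the ℂ-linear endomorphism of R_n given by multiplication by x − y equals the ideal of R_n generated by h_n; moreover the map ℂ[x]/(xⁿ) → R_n sending the class of p(x) to the class of p(x)·h_n is a ℂ-linear isomorphism onto this kernel. -/
open MvPolynomial

/-- The polynomial `h_n = Σ_{i=0}^{n-1} x^i y^(n-1-i)` in `ℂ[x,y]`. -/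
noncomputable abbrev hPoly (n : ℕ) : MvPolynomial (Fin 2) ℂ :=
  ∑ i ∈ Finset.range n, X 0 ^ i * X 1 ^ (n - 1 - i)

lemma hPoly_mul (n : ℕ) :
    (X 0 - X 1 : MvPolynomial (Fin 2) ℂ) * hPoly n = X 0 ^ n - X 1 ^ n := by
  have tele := Finset.sum_range_sub
    (f := fun i => (X 0 : MvPolynomial (Fin 2) ℂ) ^ i * X 1 ^ (n - i)) n
  have expand : (X 0 - X 1 : MvPolynomial (Fin 2) ℂ) * hPoly n
      = ∑ i ∈ Finset.range n,
        ((X 0 : MvPolynomial (Fin 2) ℂ) ^ (i+1) * X 1 ^ (n - (i+1))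
          - X 0 ^ i * X 1 ^ (n - i)) := by
    rw [Finset.mul_sum]
    refine Finset.sum_congr rfl fun i hi => ?_
    have hi' : i < n := Finset.mem_range.mp hi
    have h1 : n - (i+1) = n - 1 - i := by omega
    have h2 : n - i = (n - 1 - i) + 1 := by omega
    rw [h1, h2]
    ring
  rw [expand, tele]
  rcases Nat.eq_zero_or_pos n with rfl | hn
  · simp
  · simp [Nat.sub_self]

lemma prime_X_sub_X : Prime (X 0 - X 1 : MvPolynomial (Fin 2) ℂ) := by
  rw [← MulEquiv.prime_iff (finSuccEquiv ℂ 1).toRingEquiv.toMulEquiv]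
  have h1 : (1 : Fin 2) = Fin.succ 0 := rfl
  have key : (finSuccEquiv ℂ 1).toRingEquiv.toMulEquiv (X 0 - X 1 : MvPolynomial (Fin 2) ℂ)
      = Polynomial.X - Polynomial.C (X 0) := by
    show (finSuccEquiv ℂ 1) (X 0 - X 1) = _
    rw [map_sub, finSuccEquiv_X_zero, h1, finSuccEquiv_X_succ]
  rw [key]
  exact Polynomial.prime_X_sub_C _

lemma not_dvd_Y_pow (n : ℕ) :
    ¬ (X 0 - X 1 : MvPolynomial (Fin 2) ℂ) ∣ (X 1) ^ n := by
  rintro ⟨c, hc⟩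
  have := congrArg (MvPolynomial.eval (fun _ => (1 : ℂ))) hc
  simp at this

lemma key_decomp {n : ℕ} {f : MvPolynomial (Fin 2) ℂ}
    (hf : (X 0 - X 1) * f ∈ unlinkIdeal n) :
    ∃ a c : MvPolynomial (Fin 2) ℂ, f = a * hPoly n + c * X 1 ^ n := by
  obtain ⟨a, b, hab⟩ := Ideal.mem_span_pair.mp hf
  have h1 : (X 0 - X 1 : MvPolynomial (Fin 2) ℂ) * (f - a * hPoly n)
      = (a + b) * X 1 ^ n := by
    have hm := hPoly_mul n
    linear_combination -hab - a * hm
  have hdvd : (X 0 - X 1 : MvPolynomial (Fin 2) ℂ) ∣ (a + b) * X 1 ^ n :=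
    ⟨f - a * hPoly n, h1.symm⟩
  obtain ⟨c, hc⟩ := (prime_X_sub_X.2.2 _ _ hdvd).resolve_right (not_dvd_Y_pow n)
  have h2 : (X 0 - X 1 : MvPolynomial (Fin 2) ℂ) * (f - a * hPoly n)
      = (X 0 - X 1) * (c * X 1 ^ n) := by rw [h1, hc]; ring
  have h3 := mul_left_cancel₀ prime_X_sub_X.ne_zero h2
  exact ⟨a, c, by linear_combination h3⟩

lemma coeff_mul_X_pow_zero {m : Fin 2 →₀ ℕ} {n : ℕ} (s : Fin 2) (hm : m s < n)
    (c : MvPolynomial (Fin 2) ℂ) : coeff m (c * X s ^ n) = 0 := by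
  rw [MvPolynomial.coeff_mul]
  refine Finset.sum_eq_zero fun p hp => ?_
  rw [MvPolynomial.coeff_X_pow]
  rw [if_neg, mul_zero]
  intro h
  have hpm := Finset.HasAntidiagonal.mem_antidiagonal.mp hp
  have : m s = p.1 s + p.2 s := by rw [← hpm]; rfl
  rw [← h, Finsupp.single_apply, if_pos rfl] at this
  omega

lemma coeff_zero_of_mem {n : ℕ} {g : MvPolynomial (Fin 2) ℂ} (hg : g ∈ unlinkIdeal n)
    {m : Fin 2 →₀ ℕ} (h0 : m 0 < n) (h1 : m 1 < n) : coeff m g = 0 := by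
  obtain ⟨a, b, hab⟩ := Ideal.mem_span_pair.mp hg
  rw [← hab, coeff_add, coeff_mul_X_pow_zero 0 h0, coeff_mul_X_pow_zero 1 h1, add_zero]

lemma single_add_single_eq {a b c d : ℕ} :
    (Finsupp.single (0 : Fin 2) a + Finsupp.single 1 b
      = Finsupp.single (0 : Fin 2) c + Finsupp.single 1 d) ↔ (a = c ∧ b = d) := by
  constructor
  · intro hEq
    have h0 := DFunLike.congr_fun hEq 0
    have h1 := DFunLike.congr_fun hEq 1
    simp [Finsupp.single_apply] at h0 h1
    exact ⟨h0, h1⟩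
  · rintro ⟨rfl, rfl⟩; rfl

lemma coeff_aeval_mul_h {n : ℕ} (hn : 1 ≤ n) (p : Polynomial ℂ) (j : ℕ) :
    coeff (Finsupp.single 0 j + Finsupp.single 1 (n - 1))
      (Polynomial.aeval (X 0 : MvPolynomial (Fin 2) ℂ) p * hPoly n) = p.coeff j := by
  induction p using Polynomial.induction_on' with
  | add p q hp hq => rw [map_add, add_mul, coeff_add, hp, hq, Polynomial.coeff_add]
  | monomial d c =>
    rw [Polynomial.aeval_monomial, Polynomial.coeff_monomial]
    have expand : (algebraMap ℂ (MvPolynomial (Fin 2) ℂ)) c * X 0 ^ d * hPoly n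
        = ∑ i ∈ Finset.range n,
            monomial (Finsupp.single 0 (d + i) + Finsupp.single 1 (n - 1 - i)) c := by
      rw [Finset.mul_sum]
      refine Finset.sum_congr rfl fun i _ => ?_
      have step : (algebraMap ℂ (MvPolynomial (Fin 2) ℂ)) c * X 0 ^ d
          * (X 0 ^ i * X 1 ^ (n - 1 - i))
          = (C c * X 0 ^ (d + i)) * X 1 ^ (n - 1 - i) := by
        rw [show (algebraMap ℂ (MvPolynomial (Fin 2) ℂ)) c = C c from rfl]
        ring
      rw [step, C_mul_X_pow_eq_monomial, X_pow_eq_monomial, monomial_mul, mul_one]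
    rw [expand, coeff_sum]
    simp only [coeff_monomial]
    rw [Finset.sum_eq_single 0]
    · rw [add_zero, Nat.sub_zero]
      by_cases hdj : d = j
      · subst hdj
        rw [if_pos rfl, if_pos rfl]
      · rw [if_neg, if_neg hdj]
        intro h
        obtain ⟨h1, h2⟩ := single_add_single_eq.mp h
        exact hdj (by omega)
    · intro i hi hi0
      rw [if_neg]
      intro h
      obtain ⟨h1, h2⟩ := single_add_single_eq.mp h
      have : i < n := Finset.mem_range.mp hi
      omega
    · intro h
      exact absurd (Finset.mem_range.mpr hn) h

lemma sub_tau_mem (f : MvPolynomial (Fin 2) ℂ) :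
    f - Polynomial.aeval (X 0 : MvPolynomial (Fin 2) ℂ)
        (MvPolynomial.aeval (fun _ : Fin 2 => (Polynomial.X : Polynomial ℂ)) f)
      ∈ Ideal.span {(X 0 - X 1 : MvPolynomial (Fin 2) ℂ)} := by
  induction f using MvPolynomial.induction_on with
  | C a => simp
  | add p q hp hq =>
    rw [map_add, map_add, add_sub_add_comm]
    exact add_mem hp hq
  | mul_X p i hp =>
    rw [map_mul, map_mul, MvPolynomial.aeval_X, Polynomial.aeval_X]
    set t := Polynomial.aeval (X 0 : MvPolynomial (Fin 2) ℂ)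
        (MvPolynomial.aeval (fun _ : Fin 2 => (Polynomial.X : Polynomial ℂ)) p) with ht
    fin_cases i
    · show p * X 0 - t * X 0 ∈ Ideal.span {(X 0 - X 1 : MvPolynomial (Fin 2) ℂ)}
      have e : p * X 0 - t * X 0 = (p - t) * X 0 := by ring
      rw [e]
      exact Ideal.mul_mem_right _ _ hp
    · show p * X 1 - t * X 0 ∈ Ideal.span {(X 0 - X 1 : MvPolynomial (Fin 2) ℂ)}
      have e : p * X 1 - t * X 0 = (p - t) * X 1 + (-t) * (X 0 - X 1) := by ring
      rw [e]
      exact add_mem (Ideal.mul_mem_right _ _ hp)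
        (Ideal.mem_span_singleton'.mpr ⟨-t, rfl⟩)

set_option maxHeartbeats 1000000 in
/-- For `n ≥ 1`, the kernel of multiplication by `x - y` on `R_n = ℂ[x,y]/(xⁿ, yⁿ)` equals
the ideal generated by the class of `h_n = Σ_{i=0}^{n-1} x^i y^(n-1-i)`; moreover the map
`ℂ[x]/(xⁿ) → R_n` sending the class of `p(x)` to the class of `p(x) · h_n` is a `ℂ`-linear
isomorphism onto this kernel. -/
theorem ker_mul_X_sub_Y_eq_span_hPoly (n : ℕ) (hn : 1 ≤ n) :
    ((LinearMap.ker (LinearMap.mulLeft ℂ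
        (Ideal.Quotient.mk (unlinkIdeal n) (X 0 - X 1)))) :
          Set (MvPolynomial (Fin 2) ℂ ⧸ unlinkIdeal n)) =
      ((Ideal.span {Ideal.Quotient.mk (unlinkIdeal n) (hPoly n)}) :
          Set (MvPolynomial (Fin 2) ℂ ⧸ unlinkIdeal n)) ∧
    ∃ φ : (Polynomial ℂ ⧸ Ideal.span {(Polynomial.X : Polynomial ℂ) ^ n}) →ₗ[ℂ]
        (MvPolynomial (Fin 2) ℂ ⧸ unlinkIdeal n),
      (∀ p : Polynomial ℂ,
        φ (Ideal.Quotient.mk (Ideal.span {(Polynomial.X : Polynomial ℂ) ^ n}) p) =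
          Ideal.Quotient.mk (unlinkIdeal n)
            (Polynomial.aeval (X 0 : MvPolynomial (Fin 2) ℂ) p * hPoly n)) ∧
      Function.Injective φ ∧
      LinearMap.range φ = LinearMap.ker (LinearMap.mulLeft ℂ
        (Ideal.Quotient.mk (unlinkIdeal n) (X 0 - X 1))) := by
  have hXn_mem : (X 0 ^ n : MvPolynomial (Fin 2) ℂ) ∈ unlinkIdeal n :=
    Ideal.subset_span (by simp)
  have hYn_mem : (X 1 ^ n : MvPolynomial (Fin 2) ℂ) ∈ unlinkIdeal n :=
    Ideal.subset_span (by simp)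
  have huh : Ideal.Quotient.mk (unlinkIdeal n) (X 0 - X 1)
      * Ideal.Quotient.mk (unlinkIdeal n) (hPoly n) = 0 := by
    rw [← map_mul, hPoly_mul]
    exact Ideal.Quotient.eq_zero_iff_mem.mpr (sub_mem hXn_mem hYn_mem)
  have part1 : ((LinearMap.ker (LinearMap.mulLeft ℂ
        (Ideal.Quotient.mk (unlinkIdeal n) (X 0 - X 1)))) :
          Set (MvPolynomial (Fin 2) ℂ ⧸ unlinkIdeal n)) =
      ((Ideal.span {Ideal.Quotient.mk (unlinkIdeal n) (hPoly n)}) :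
          Set (MvPolynomial (Fin 2) ℂ ⧸ unlinkIdeal n)) := by
    ext z
    simp only [SetLike.mem_coe, LinearMap.mem_ker, LinearMap.mulLeft_apply]
    constructor
    · intro hz
      obtain ⟨f, rfl⟩ := Ideal.Quotient.mk_surjective z
      have hmem : (X 0 - X 1) * f ∈ unlinkIdeal n := by
        rw [← Ideal.Quotient.eq_zero_iff_mem, map_mul]
        exact hz
      obtain ⟨a, c, rfl⟩ := key_decomp hmem
      rw [map_add, map_mul, map_mul, Ideal.Quotient.eq_zero_iff_mem.mpr hYn_mem,
        mul_zero, add_zero]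
      exact Ideal.mem_span_singleton'.mpr ⟨Ideal.Quotient.mk _ a, rfl⟩
    · intro hz
      obtain ⟨r, rfl⟩ := Ideal.mem_span_singleton'.mp hz
      calc Ideal.Quotient.mk (unlinkIdeal n) (X 0 - X 1)
            * (r * Ideal.Quotient.mk (unlinkIdeal n) (hPoly n))
          = r * (Ideal.Quotient.mk (unlinkIdeal n) (X 0 - X 1)
            * Ideal.Quotient.mk (unlinkIdeal n) (hPoly n)) := by ring
        _ = 0 := by rw [huh, mul_zero]
  refine ⟨part1, ?_⟩
  -- construct φ
  set f0 : Polynomial ℂ →ₗ[ℂ] (MvPolynomial (Fin 2) ℂ ⧸ unlinkIdeal n) :=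
    (Ideal.Quotient.mkₐ ℂ (unlinkIdeal n)).toLinearMap.comp
      ((LinearMap.mulRight ℂ (hPoly n)).comp
        (Polynomial.aeval (X 0 : MvPolynomial (Fin 2) ℂ)).toLinearMap) with hf0
  have hf0_apply : ∀ p : Polynomial ℂ, f0 p =
      Ideal.Quotient.mk (unlinkIdeal n)
        (Polynomial.aeval (X 0 : MvPolynomial (Fin 2) ℂ) p * hPoly n) := fun p => rfl
  have hker : (Ideal.span {(Polynomial.X : Polynomial ℂ) ^ n}).restrictScalars ℂ
      ≤ LinearMap.ker f0 := by
    intro p hp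
    rw [Submodule.restrictScalars_mem] at hp
    obtain ⟨q, hq⟩ := Ideal.mem_span_singleton'.mp hp
    rw [LinearMap.mem_ker, hf0_apply, ← hq]
    rw [Ideal.Quotient.eq_zero_iff_mem]
    have e : Polynomial.aeval (X 0 : MvPolynomial (Fin 2) ℂ)
        (q * Polynomial.X ^ n) * hPoly n
        = (Polynomial.aeval (X 0 : MvPolynomial (Fin 2) ℂ) q * hPoly n) * X 0 ^ n := by
      rw [map_mul, map_pow, Polynomial.aeval_X]
      ring
    rw [e]
    exact Ideal.mul_mem_left _ _ hXn_mem
  have exPhi : ∃ φ : (Polynomial ℂ ⧸ Ideal.span {(Polynomial.X : Polynomial ℂ) ^ n}) →ₗ[ℂ]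
      (MvPolynomial (Fin 2) ℂ ⧸ unlinkIdeal n),
      ∀ p : Polynomial ℂ,
        φ (Ideal.Quotient.mk (Ideal.span {(Polynomial.X : Polynomial ℂ) ^ n}) p) =
          Ideal.Quotient.mk (unlinkIdeal n)
            (Polynomial.aeval (X 0 : MvPolynomial (Fin 2) ℂ) p * hPoly n) := by
    refine ⟨(Submodule.liftQ _ f0 hker).comp
      (Submodule.Quotient.restrictScalarsEquiv ℂ
        (Ideal.span {(Polynomial.X : Polynomial ℂ) ^ n})).symm.toLinearMap, fun p => ?_⟩
    rw [LinearMap.comp_apply, LinearEquiv.coe_toLinearMap, ← Ideal.Quotient.mk_eq_mk,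
      Submodule.Quotient.restrictScalarsEquiv_symm_mk, Submodule.liftQ_apply]
    exact hf0_apply p
  obtain ⟨Φ, hΦmk⟩ := exPhi
  refine ⟨Φ, hΦmk, ?_, ?_⟩
  · -- injectivity
    rw [injective_iff_map_eq_zero]
    intro q hq
    obtain ⟨p, rfl⟩ := Ideal.Quotient.mk_surjective q
    rw [hΦmk] at hq
    have hmem := Ideal.Quotient.eq_zero_iff_mem.mp hq
    rw [Ideal.Quotient.eq_zero_iff_mem, Ideal.mem_span_singleton]
    rw [Polynomial.X_pow_dvd_iff]
    intro d hd
    have e0 : (Finsupp.single (0 : Fin 2) d + Finsupp.single 1 (n-1) : Fin 2 →₀ ℕ) 0 = d := by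
      simp [Finsupp.single_apply]
    have e1 : (Finsupp.single (0 : Fin 2) d + Finsupp.single 1 (n-1) : Fin 2 →₀ ℕ) 1 = n - 1 := by
      simp [Finsupp.single_apply]
    rw [← coeff_aeval_mul_h hn p d]
    exact coeff_zero_of_mem hmem (by rw [e0]; omega) (by rw [e1]; omega)
  · -- range = kernel
    ext z
    constructor
    · rintro ⟨q, rfl⟩
      obtain ⟨p, rfl⟩ := Ideal.Quotient.mk_surjective q
      rw [hΦmk, LinearMap.mem_ker, LinearMap.mulLeft_apply, ← map_mul]
      have e : (X 0 - X 1) * (Polynomial.aeval (X 0 : MvPolynomial (Fin 2) ℂ) p * hPoly n)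
          = Polynomial.aeval (X 0 : MvPolynomial (Fin 2) ℂ) p * ((X 0 - X 1) * hPoly n) := by
        ring
      rw [e, hPoly_mul]
      exact Ideal.Quotient.eq_zero_iff_mem.mpr
        (Ideal.mul_mem_left _ _ (sub_mem hXn_mem hYn_mem))
    · intro hz
      have hz' : z ∈ Ideal.span {Ideal.Quotient.mk (unlinkIdeal n) (hPoly n)} := by
        rw [← SetLike.mem_coe, ← part1]
        exact hz
      obtain ⟨r, hr⟩ := Ideal.mem_span_singleton'.mp hz'
      obtain ⟨f, rfl⟩ := Ideal.Quotient.mk_surjective r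
      refine ⟨Ideal.Quotient.mk _
        (MvPolynomial.aeval (fun _ : Fin 2 => (Polynomial.X : Polynomial ℂ)) f), ?_⟩
      rw [hΦmk, ← hr, ← map_mul]
      obtain ⟨c, hc⟩ := Ideal.mem_span_singleton'.mp (sub_tau_mem f)
      rw [Ideal.Quotient.mk_eq_mk_iff_sub_mem]
      have e : Polynomial.aeval (X 0 : MvPolynomial (Fin 2) ℂ)
            (MvPolynomial.aeval (fun _ : Fin 2 => (Polynomial.X : Polynomial ℂ)) f)
            * hPoly n - f * hPoly n
          = (-c) * (X 0 ^ n - X 1 ^ n) := by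
        linear_combination hPoly n * hc - c * hPoly_mul n
      rw [e]
      exact Ideal.mul_mem_left _ _ (sub_mem hXn_mem hYn_mem)
end
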